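/- Let A be a unital C*-algebra in which every maximal abelian *-subalgebra is monotone σ-complete. Then for each x ∈ A, the set P = {e ∈ Proj(A) : xe = 0} has a largest element. -/

import Mathlib

open scoped NNReal
open Polynomial

section Helpers

variable {A : Type*} [CStarAlgebra A] [PartialOrder A] [StarOrderedRing A]

/-- real square root via continuous functional calculus -/
noncomputable def rsqrt (a : A) : A := cfc Real.sqrt a

lemma rsqrt_nonneg (a : A) : 0 ≤ rsqrt a :=
  cfc_nonneg fun x _ => Real.sqrt_nonneg x

lemma rsqrt_isSelfAdjoint (a : A) : IsSelfAdjoint (rsqrt a) :=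
  IsSelfAdjoint.of_nonneg (rsqrt_nonneg a)

lemma rsqrt_star (a : A) : star (rsqrt a) = rsqrt a := (rsqrt_isSelfAdjoint a).star_eq

lemma rsqrt_mul_self {a : A} (ha : 0 ≤ a) : rsqrt a * rsqrt a = a := by
  have hsa : IsSelfAdjoint a := IsSelfAdjoint.of_nonneg ha
  rw [rsqrt, ← cfc_mul Real.sqrt Real.sqrt a
    Real.continuous_sqrt.continuousOn Real.continuous_sqrt.continuousOn]
  calc cfc (fun x => Real.sqrt x * Real.sqrt x) a = cfc (id : ℝ → ℝ) a := by
        apply cfc_congr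
        intro t ht
        exact Real.mul_self_sqrt (spectrum_nonneg_of_nonneg ha ht)
    _ = a := cfc_id ℝ a hsa

lemma norm_rsqrt_mul {a : A} (ha : 0 ≤ a) : ‖rsqrt a‖ * ‖rsqrt a‖ = ‖a‖ := by
  rw [← CStarRing.norm_star_mul_self (x := rsqrt a), rsqrt_star, rsqrt_mul_self ha]

lemma norm_rsqrt_le_one {a : A} (ha : 0 ≤ a) (h1 : ‖a‖ ≤ 1) : ‖rsqrt a‖ ≤ 1 := by
  nlinarith [norm_rsqrt_mul ha, norm_nonneg (rsqrt a), norm_nonneg a]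

/-- commutation passes through the real continuous functional calculus -/
lemma commute_cfc_real {a : A} (z : A) (ha : IsSelfAdjoint a) (h : z * a = a * z)
    {f : ℝ → ℝ} (hf : ContinuousOn f (spectrum ℝ a)) : z * cfc f a = cfc f a * z := by
  haveI : CompactSpace (spectrum ℝ a) :=
    ContinuousFunctionalCalculus.compactSpace_spectrum (R := ℝ) a
  have hpoly : ∀ p : ℝ[X], z * (Polynomial.aeval a p) = (Polynomial.aeval a p) * z := by
    intro p
    induction p using Polynomial.induction_on with
    | C c => simp only [Polynomial.aeval_C]; exact (Algebra.commutes c z).symm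
    | add p q hp hq => simp only [map_add, mul_add, add_mul, hp, hq]
    | monomial n c hc =>
      simp only [map_mul, Polynomial.aeval_C, map_pow, Polynomial.aeval_X, pow_succ] at hc ⊢
      calc z * (algebraMap ℝ A c * (a ^ n * a))
          = z * (algebraMap ℝ A c * a ^ n) * a := by noncomm_ring
        _ = algebraMap ℝ A c * a ^ n * z * a := by rw [hc]
        _ = algebraMap ℝ A c * a ^ n * (z * a) := by noncomm_ring
        _ = algebraMap ℝ A c * (a ^ n * a) * z := by rw [h]; noncomm_ring
  have hcl : IsClosed {w : A | z * w = w * z} :=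
    isClosed_eq (continuous_const.mul continuous_id) (continuous_id.mul continuous_const)
  have hmem : cfc f a ∈ {w : A | z * w = w * z} := by
    rw [← hcl.closure_eq]
    refine Metric.mem_closure_iff.mpr fun ε hε => ?_
    set fc : C(spectrum ℝ a, ℝ) := ⟨(spectrum ℝ a).restrict f, hf.restrict⟩ with hfc
    have hmem2 : fc ∈ (polynomialFunctions (spectrum ℝ a)).topologicalClosure := by
      rw [polynomialFunctions.topologicalClosure]; trivial
    have hmem3 : fc ∈ closure (polynomialFunctions (spectrum ℝ a) : Set C(spectrum ℝ a, ℝ)) :=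
      hmem2
    obtain ⟨g, hg, hdist⟩ := Metric.mem_closure_iff.mp hmem3 ε hε
    rw [polynomialFunctions_coe] at hg
    obtain ⟨p, rfl⟩ := hg
    refine ⟨Polynomial.aeval a p, hpoly p, ?_⟩
    rw [dist_eq_norm, ← cfc_polynomial p a ha,
      ← cfc_sub f (fun t => Polynomial.eval t p) a hf
        (Polynomial.continuous p).continuousOn]
    have hb : ∀ t ∈ spectrum ℝ a, ‖f t - Polynomial.eval t p‖ ≤ dist fc (Polynomial.toContinuousMapOnAlgHom (spectrum ℝ a) p) := by
      intro t ht
      have := ContinuousMap.dist_apply_le_dist (f := fc)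
        (g := Polynomial.toContinuousMapOnAlgHom (spectrum ℝ a) p) ⟨t, ht⟩
      have h2 : fc ⟨t, ht⟩ = f t := rfl
      simpa [h2, Real.dist_eq, Real.norm_eq_abs] using this
    calc ‖cfc (fun t => f t - Polynomial.eval t p) a‖
        ≤ dist fc (Polynomial.toContinuousMapOnAlgHom (spectrum ℝ a) p) :=
          norm_cfc_le dist_nonneg hb
      _ < ε := hdist
  exact hmem

lemma commute_rsqrt {a : A} (z : A) (ha : 0 ≤ a) (h : z * a = a * z) :
    z * rsqrt a = rsqrt a * z :=
  commute_cfc_real z (IsSelfAdjoint.of_nonneg ha) h Real.continuous_sqrt.continuousOn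

/-- product of commuting nonnegative elements is nonnegative -/
lemma mul_nonneg_of_commute {u v : A} (hu : 0 ≤ u) (hv : 0 ≤ v) (h : u * v = v * u) :
    0 ≤ u * v := by
  have hcomm : v * rsqrt u = rsqrt u * v := commute_rsqrt v hu h.symm
  have key : star (rsqrt u) * v * rsqrt u = u * v := by
    rw [rsqrt_star]
    calc rsqrt u * v * rsqrt u = rsqrt u * (v * rsqrt u) := by rw [mul_assoc]
      _ = rsqrt u * (rsqrt u * v) := by rw [hcomm]
      _ = rsqrt u * rsqrt u * v := by rw [mul_assoc]
      _ = u * v := by rw [rsqrt_mul_self hu]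
  rw [← key]
  exact star_left_conjugate_nonneg hv _

end Helpers

section Helpers2
variable {A : Type*} [CStarAlgebra A] [PartialOrder A] [StarOrderedRing A]

lemma proj_nonneg {p : A} (hs : star p = p) (hi : p * p = p) : 0 ≤ p := by
  have := star_mul_self_nonneg p
  rwa [hs, hi] at this

lemma proj_le_one {p : A} (hs : star p = p) (hi : p * p = p) : p ≤ 1 := by
  have h : star (1 - p) * (1 - p) = 1 - p := by
    rw [star_sub, star_one, hs]
    calc (1 - p) * (1 - p) = 1 - p - p + p * p := by noncomm_ring
      _ = 1 - p := by rw [hi]; noncomm_ring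
  have h2 : (0 : A) ≤ 1 - p := h ▸ star_mul_self_nonneg (1 - p)
  exact sub_nonneg.mp h2

lemma le_one_of_norm {a : A} (ha : 0 ≤ a) (h1 : ‖a‖ ≤ 1) : a ≤ 1 := by
  have hsa : IsSelfAdjoint a := .of_nonneg ha
  refine le_trans (hsa.le_algebraMap_norm_self) ?_
  have key : (1 : A) - algebraMap ℝ A ‖a‖ =
      star (algebraMap ℝ A (Real.sqrt (1 - ‖a‖))) * (algebraMap ℝ A (Real.sqrt (1 - ‖a‖))) := by
    have hst : star (algebraMap ℝ A (Real.sqrt (1 - ‖a‖))) =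
        algebraMap ℝ A (Real.sqrt (1 - ‖a‖)) := by
      rw [← algebraMap_star_comm, star_trivial]
    rw [hst, ← map_mul, Real.mul_self_sqrt (by linarith), map_sub, map_one]
  have h2 : (0:A) ≤ 1 - algebraMap ℝ A ‖a‖ := key ▸ star_mul_self_nonneg _
  exact sub_nonneg.mp h2

lemma sq_le_self {u : A} (hu : 0 ≤ u) (h1 : u ≤ 1) : u * u ≤ u := by
  have hss : rsqrt u * rsqrt u = u := rsqrt_mul_self hu
  have key : star (rsqrt u) * (1 - u) * rsqrt u = u - u * u := by
    rw [rsqrt_star]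
    set s := rsqrt u with hs
    have h2 : u = s * s := hss.symm
    rw [h2]
    noncomm_ring
  have h2 : (0:A) ≤ u - u * u := key ▸ star_left_conjugate_nonneg (sub_nonneg.mpr h1) _
  exact sub_nonneg.mp h2

/-- two commuting orthogonal positive contractions sum to at most one -/
lemma orth_sum_le_one {u v : A} (hu0 : 0 ≤ u) (hu1 : u ≤ 1) (hv0 : 0 ≤ v) (hv1 : v ≤ 1)
    (huv : u * v = 0) (hvu : v * u = 0) : u + v ≤ 1 := by
  have husa : star u = u := (IsSelfAdjoint.of_nonneg hu0).star_eq
  have e1 : (1 - v) * (1 - u) = 1 - u - v + v * u := by noncomm_ring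
  have e2 : (1 - u) * ((1 - v) * (1 - u)) = (1-u) * (1 - u - v) := by rw [e1, hvu, add_zero]
  have e3 : (1 - u) * (1 - u - v) = 1 - u - v - u + u * u + u * v := by noncomm_ring
  have e4 : (1 - u) * ((1 - v) * (1 - u)) = 1 - u - v - u + u * u := by
    rw [e2, e3, huv, add_zero]
  have key : 1 - (u + v) = (1 - u) * ((1 - v) * (1 - u)) + (u - u * u) := by
    rw [e4]; noncomm_ring
  have hpos1 : (0:A) ≤ (1 - u) * ((1 - v) * (1 - u)) := by
    have := star_left_conjugate_nonneg (sub_nonneg.mpr hv1) (1 - u)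
    rwa [star_sub, star_one, husa, mul_assoc] at this
  have hpos2 : (0:A) ≤ u - u * u := sub_nonneg.mpr (sq_le_self hu0 hu1)
  have : (0:A) ≤ 1 - (u + v) := by rw [key]; exact add_nonneg hpos1 hpos2
  exact sub_nonneg.mp this

/-- a positive element dominated by a projection is absorbed by it -/
lemma absorb {v p : A} (hv : 0 ≤ v) (hps : star p = p) (hpi : p * p = p) (h : v ≤ p) :
    v * p = v ∧ p * v = v := by
  have h1 : star (1 - p) * v * (1 - p) ≤ star (1 - p) * p * (1 - p) :=
    star_left_conjugate_le_conjugate h (1 - p)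
  have hst : star (1 - p) = 1 - p := by rw [star_sub, star_one, hps]
  have h2 : star (1 - p) * p * (1 - p) = 0 := by
    rw [hst]
    calc (1 - p) * p * (1 - p) = (p - p * p) * (1 - p) := by noncomm_ring
      _ = 0 := by rw [hpi, sub_self, zero_mul]
  have h3 : (0:A) ≤ star (1 - p) * v * (1 - p) := star_left_conjugate_nonneg hv _
  have h4 : star (1 - p) * v * (1 - p) = 0 := le_antisymm (h1.trans_eq h2) h3
  have h5 : star (rsqrt v * (1 - p)) * (rsqrt v * (1 - p)) = 0 := by
    calc star (rsqrt v * (1 - p)) * (rsqrt v * (1 - p))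
        = star (1 - p) * (star (rsqrt v) * rsqrt v) * (1 - p) := by
          rw [star_mul]; noncomm_ring
      _ = star (1 - p) * v * (1 - p) := by rw [rsqrt_star, rsqrt_mul_self hv]
      _ = 0 := h4
  have h6 : rsqrt v * (1 - p) = 0 := (CStarRing.star_mul_self_eq_zero_iff _).mp h5
  have h7 : v * (1 - p) = 0 := by
    calc v * (1 - p) = rsqrt v * (rsqrt v * (1 - p)) := by
          rw [← mul_assoc, rsqrt_mul_self hv]
      _ = 0 := by rw [h6, mul_zero]
  constructor
  · have := h7
    rw [mul_sub, mul_one, sub_eq_zero] at this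
    exact this.symm
  · have h8 : (1 - p) * v = 0 := by
      have := congrArg star h7
      rwa [star_mul, hst, star_zero, (IsSelfAdjoint.of_nonneg hv).star_eq] at this
    rw [sub_mul, one_mul, sub_eq_zero] at h8
    exact h8.symm

/-- squares of commuting ordered nonneg elements are ordered -/
lemma mul_self_le_mul_self_comm {u b : A} (hu : 0 ≤ u) (hb : 0 ≤ b) (h : u ≤ b)
    (hc : u * b = b * u) : u * u ≤ b * b := by
  have key : b * b - u * u = (b - u) * (b + u) := by noncomm_ring [hc]
  have hcomm2 : (b - u) * (b + u) = (b + u) * (b - u) := by noncomm_ring [hc]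
  have := mul_nonneg_of_commute (sub_nonneg.mpr h) (add_nonneg hb hu) hcomm2
  rw [← key] at this
  exact sub_nonneg.mp this

end Helpers2

section SqrtSeq
variable {A : Type*} [CStarAlgebra A] [PartialOrder A] [StarOrderedRing A]

/-- iterated square roots `v ^ (2 ^ (-k))` -/
noncomputable def sqrtSeq (v : A) : ℕ → A
  | 0 => v
  | (k+1) => rsqrt (sqrtSeq v k)

variable {v : A}

lemma sqrtSeq_nonneg (hv : 0 ≤ v) : ∀ k, 0 ≤ sqrtSeq v k
  | 0 => hv
  | (k+1) => rsqrt_nonneg _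

lemma sqrtSeq_star (hv : 0 ≤ v) (k : ℕ) : star (sqrtSeq v k) = sqrtSeq v k :=
  (IsSelfAdjoint.of_nonneg (sqrtSeq_nonneg hv k)).star_eq

lemma sqrtSeq_succ_mul (hv : 0 ≤ v) (k : ℕ) :
    sqrtSeq v (k+1) * sqrtSeq v (k+1) = sqrtSeq v k :=
  rsqrt_mul_self (sqrtSeq_nonneg hv k)

lemma sqrtSeq_norm_le_one (hv : 0 ≤ v) (hv1 : ‖v‖ ≤ 1) : ∀ k, ‖sqrtSeq v k‖ ≤ 1
  | 0 => hv1
  | (k+1) => norm_rsqrt_le_one (sqrtSeq_nonneg hv k) (sqrtSeq_norm_le_one hv hv1 k)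

lemma sqrtSeq_le_one (hv : 0 ≤ v) (hv1 : ‖v‖ ≤ 1) (k : ℕ) : sqrtSeq v k ≤ 1 :=
  le_one_of_norm (sqrtSeq_nonneg hv k) (sqrtSeq_norm_le_one hv hv1 k)

lemma sqrtSeq_mono (hv : 0 ≤ v) (hv1 : ‖v‖ ≤ 1) : Monotone (sqrtSeq v) := by
  apply monotone_nat_of_le_succ
  intro k
  have h := sq_le_self (sqrtSeq_nonneg hv (k+1)) (sqrtSeq_le_one hv hv1 (k+1))
  rwa [sqrtSeq_succ_mul hv k] at h

/-- anything commuting with the seed commutes with the whole sqrt sequence -/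
lemma sqrtSeq_commute_of_commute (hv : 0 ≤ v) {z : A} (hz : z * v = v * z) (k : ℕ) :
    z * sqrtSeq v k = sqrtSeq v k * z := by
  induction k with
  | zero => exact hz
  | succ k ih => exact commute_rsqrt z (sqrtSeq_nonneg hv k) ih

lemma sqrtSeq_commute (hv : 0 ≤ v) (j k : ℕ) :
    sqrtSeq v j * sqrtSeq v k = sqrtSeq v k * sqrtSeq v j := by
  -- show each term commutes with v, then use previous lemma
  have hvc : ∀ m, sqrtSeq v m * v = v * sqrtSeq v m := by
    intro m
    exact (sqrtSeq_commute_of_commute hv (rfl : v * v = v * v) m).symm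
  exact sqrtSeq_commute_of_commute hv (hvc j) k

/-- anything annihilating the seed (two-sidedly) annihilates the whole sequence -/
lemma sqrtSeq_ann (hv : 0 ≤ v) {z : A} (h1 : z * v = 0) (h2 : v * z = 0) (k : ℕ) :
    z * sqrtSeq v k = 0 ∧ sqrtSeq v k * z = 0 := by
  induction k with
  | zero => exact ⟨h1, h2⟩
  | succ k ih =>
    obtain ⟨ih1, ih2⟩ := ih
    set a := sqrtSeq v k
    have ha : 0 ≤ a := sqrtSeq_nonneg hv k
    have hl : z * rsqrt a = 0 := by
      have : (z * rsqrt a) * star (z * rsqrt a) = 0 := by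
        calc (z * rsqrt a) * star (z * rsqrt a)
            = z * (rsqrt a * rsqrt a) * star z := by
              rw [star_mul, rsqrt_star]; noncomm_ring
          _ = (z * a) * star z := by rw [rsqrt_mul_self ha]
          _ = 0 := by rw [ih1, zero_mul]
      exact (CStarRing.mul_star_self_eq_zero_iff _).mp this
    have hr : rsqrt a * z = 0 := by
      have : star (rsqrt a * z) * (rsqrt a * z) = 0 := by
        calc star (rsqrt a * z) * (rsqrt a * z)
            = star z * (rsqrt a * rsqrt a) * z := by
              rw [star_mul, rsqrt_star]; noncomm_ring
          _ = star z * (a * z) := by rw [rsqrt_mul_self ha, mul_assoc]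
          _ = 0 := by rw [ih2, mul_zero]
      exact (CStarRing.star_mul_self_eq_zero_iff _).mp this
    exact ⟨hl, hr⟩

end SqrtSeq

/-- `S` is a (not necessarily unital) star-subalgebra, viewed as a set. -/
def IsStarSubalgSet {B : Type*} [NonUnitalNormedRing B] [StarRing B] [Module ℂ B]
    (S : Set B) : Prop :=
  (0 : B) ∈ S ∧ (∀ x ∈ S, ∀ y ∈ S, x + y ∈ S) ∧ (∀ (c : ℂ), ∀ x ∈ S, c • x ∈ S) ∧
    (∀ x ∈ S, ∀ y ∈ S, x * y ∈ S) ∧ (∀ x ∈ S, star x ∈ S)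

/-- `S` is a maximal abelian star-subalgebra. -/
def IsMasa {B : Type*} [NonUnitalNormedRing B] [StarRing B] [Module ℂ B]
    (S : Set B) : Prop :=
  IsStarSubalgSet S ∧ (∀ x ∈ S, ∀ y ∈ S, x * y = y * x) ∧
    ∀ T : Set B, IsStarSubalgSet T → (∀ x ∈ T, ∀ y ∈ T, x * y = y * x) → S ⊆ T → T = S

/-- The set `S` is monotone σ-complete: every norm-bounded monotone increasing sequence of
self-adjoint elements of `S` has a supremum within the self-adjoint part of `S`. -/
def MonotoneSigmaComplete {B : Type*} [NonUnitalNormedRing B] [StarRing B] [Module ℂ B]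
    [PartialOrder B] (S : Set B) : Prop :=
  ∀ a : ℕ → B, (∀ n, a n ∈ S) → (∀ n, star (a n) = a n) → Monotone a →
    (∃ c : ℝ, ∀ n, ‖a n‖ ≤ c) →
    ∃ b ∈ S, star b = b ∧ (∀ n, a n ≤ b) ∧
      ∀ x ∈ S, star x = x → (∀ n, a n ≤ x) → b ≤ x

section Masa
variable {A : Type*} [CStarAlgebra A] [PartialOrder A] [StarOrderedRing A]

lemma exists_masa (S₀ : Set A) (hsa : ∀ s ∈ S₀, star s = s)
    (hc : ∀ s ∈ S₀, ∀ t ∈ S₀, s * t = t * s) :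
    ∃ M : Set A, IsMasa M ∧ S₀ ⊆ M := by
  classical
  -- the seed: the non-unital star subalgebra generated by S₀, which is abelian
  set T : Set A := ((NonUnitalStarAlgebra.adjoin ℂ S₀ : NonUnitalStarSubalgebra ℂ A) : Set A)
    with hT
  have hmemT : ∀ {a : A}, a ∈ T ↔ a ∈ NonUnitalStarAlgebra.adjoin ℂ S₀ := by
    intro a; rw [hT, SetLike.mem_coe]
  have hT0 : IsStarSubalgSet T := by
    refine ⟨hmemT.mpr (zero_mem _), fun a ha b hb => hmemT.mpr (add_mem (hmemT.mp ha) (hmemT.mp hb)),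
      fun c a ha => hmemT.mpr (SMulMemClass.smul_mem c (hmemT.mp ha)),
      fun a ha b hb => hmemT.mpr (mul_mem (hmemT.mp ha) (hmemT.mp hb)),
      fun a ha => hmemT.mpr (star_mem (hmemT.mp ha))⟩
  have hTsub : S₀ ⊆ T := fun s hs => hmemT.mpr (NonUnitalStarAlgebra.subset_adjoin ℂ S₀ hs)
  have step1 : ∀ a ∈ NonUnitalStarAlgebra.adjoin ℂ S₀, ∀ s ∈ S₀, a * s = s * a := by
    intro a ha
    induction ha using NonUnitalStarAlgebra.adjoin_induction with
    | mem x hx => exact fun s hs => hc x hx s hs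
    | add x y hx hy ihx ihy => intro s hs; rw [add_mul, mul_add, ihx s hs, ihy s hs]
    | zero => intro s hs; rw [zero_mul, mul_zero]
    | mul x y hx hy ihx ihy =>
      intro s hs
      calc x * y * s = x * (y * s) := by rw [mul_assoc]
        _ = x * (s * y) := by rw [ihy s hs]
        _ = (x * s) * y := by rw [mul_assoc]
        _ = s * (x * y) := by rw [ihx s hs, mul_assoc]
    | smul c x hx ihx => intro s hs; rw [smul_mul_assoc, mul_smul_comm, ihx s hs]
    | star x hx ihx =>
      intro s hs
      calc star x * s = star x * star s := by rw [hsa s hs]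
        _ = star (s * x) := by rw [star_mul]
        _ = star (x * s) := by rw [← ihx s hs]
        _ = star s * star x := by rw [star_mul]
        _ = s * star x := by rw [hsa s hs]
  have hTc' : ∀ b ∈ NonUnitalStarAlgebra.adjoin ℂ S₀,
      ∀ a ∈ NonUnitalStarAlgebra.adjoin ℂ S₀, a * b = b * a := by
    intro b hb
    induction hb using NonUnitalStarAlgebra.adjoin_induction with
    | mem x hx => exact fun a ha => step1 a ha x hx
    | add x y hx hy ihx ihy => intro a ha; rw [mul_add, add_mul, ihx a ha, ihy a ha]
    | zero => intro a ha; rw [mul_zero, zero_mul]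
    | mul x y hx hy ihx ihy =>
      intro a ha
      calc a * (x * y) = (a * x) * y := by rw [mul_assoc]
        _ = x * (a * y) := by rw [ihx a ha, mul_assoc]
        _ = x * (y * a) := by rw [ihy a ha]
        _ = x * y * a := by rw [mul_assoc]
    | smul c x hx ihx => intro a ha; rw [mul_smul_comm, smul_mul_assoc, ihx a ha]
    | star x hx ihx =>
      intro a ha
      have h1 : star a * x = x * star a := ihx (star a) (star_mem ha)
      calc a * star x = star (x * star a) := by rw [star_mul, star_star]
        _ = star (star a * x) := by rw [← h1]
        _ = star x * a := by rw [star_mul, star_star]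
  have hTc : ∀ a ∈ T, ∀ b ∈ T, a * b = b * a := fun a ha b hb =>
    hTc' b (hmemT.mp hb) a (hmemT.mp ha)
  -- Zorn's lemma
  set 𝒜 : Set (Set A) :=
    {S | IsStarSubalgSet S ∧ (∀ x ∈ S, ∀ y ∈ S, x * y = y * x) ∧ S₀ ⊆ S} with h𝒜
  have hchain : ∀ c ⊆ 𝒜, IsChain (· ⊆ ·) c → c.Nonempty → ∃ ub ∈ 𝒜, ∀ s ∈ c, s ⊆ ub := by
    intro c hc𝒜 hchain ⟨S1, hS1⟩
    refine ⟨⋃₀ c, ⟨?_, ?_, ?_⟩, fun s hs => Set.subset_sUnion_of_mem hs⟩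
    · constructor
      · exact ⟨S1, hS1, (hc𝒜 hS1).1.1⟩
      refine ⟨?_, ?_, ?_, ?_⟩
      · rintro a ⟨Sa, hSa, haSa⟩ b ⟨Sb, hSb, hbSb⟩
        rcases hchain.total hSa hSb with h | h
        · exact ⟨Sb, hSb, (hc𝒜 hSb).1.2.1 a (h haSa) b hbSb⟩
        · exact ⟨Sa, hSa, (hc𝒜 hSa).1.2.1 a haSa b (h hbSb)⟩
      · rintro cc a ⟨Sa, hSa, haSa⟩
        exact ⟨Sa, hSa, (hc𝒜 hSa).1.2.2.1 cc a haSa⟩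
      · rintro a ⟨Sa, hSa, haSa⟩ b ⟨Sb, hSb, hbSb⟩
        rcases hchain.total hSa hSb with h | h
        · exact ⟨Sb, hSb, (hc𝒜 hSb).1.2.2.2.1 a (h haSa) b hbSb⟩
        · exact ⟨Sa, hSa, (hc𝒜 hSa).1.2.2.2.1 a haSa b (h hbSb)⟩
      · rintro a ⟨Sa, hSa, haSa⟩
        exact ⟨Sa, hSa, (hc𝒜 hSa).1.2.2.2.2 a haSa⟩
    · rintro a ⟨Sa, hSa, haSa⟩ b ⟨Sb, hSb, hbSb⟩
      rcases hchain.total hSa hSb with h | h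
      · exact (hc𝒜 hSb).2.1 a (h haSa) b hbSb
      · exact (hc𝒜 hSa).2.1 a haSa b (h hbSb)
    · exact (hc𝒜 hS1).2.2.trans (Set.subset_sUnion_of_mem hS1)
  have hTmem : T ∈ 𝒜 := ⟨hT0, hTc, hTsub⟩
  obtain ⟨M, hTM, hMmax⟩ := zorn_subset_nonempty 𝒜 hchain T hTmem
  refine ⟨M, ⟨hMmax.prop.1, hMmax.prop.2.1, ?_⟩, hMmax.prop.2.2⟩
  intro T' hT'1 hT'2 hMT'
  have hT'mem : T' ∈ 𝒜 := ⟨hT'1, hT'2, hMmax.prop.2.2.trans hMT'⟩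
  exact Set.Subset.antisymm (hMmax.le_of_ge hT'mem hMT') hMT'
end Masa

section MasaFacts
variable {A : Type*} [CStarAlgebra A] [PartialOrder A] [StarOrderedRing A]

lemma masa_one {M : Set A} (hM : IsMasa M) : (1 : A) ∈ M := by
  obtain ⟨⟨h0, hadd, hsmul, hmul, hstar⟩, hcomm, hmax⟩ := hM
  set T : Set A := {a | ∃ m ∈ M, ∃ c : ℂ, a = m + c • 1} with hT
  have hrepr : ∀ (m m' : A) (c c' : ℂ),
      (m + c • 1) * (m' + c' • 1) = (m * m' + (c' • m + c • m')) + (c * c') • (1:A) := by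
    intro m m' c c'
    rw [mul_add, add_mul, add_mul, mul_smul_comm, mul_one, smul_mul_assoc, one_mul,
      smul_mul_assoc, one_mul, smul_smul]
    abel
  have hTsub : IsStarSubalgSet T := by
    refine ⟨⟨0, h0, 0, by simp⟩, ?_, ?_, ?_, ?_⟩
    · rintro a ⟨m, hm, c, rfl⟩ b ⟨m', hm', c', rfl⟩
      exact ⟨m + m', hadd m hm m' hm', c + c', by rw [add_smul]; abel⟩
    · rintro c a ⟨m, hm, c', rfl⟩
      exact ⟨c • m, hsmul c m hm, c * c', by rw [smul_add, smul_smul]⟩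
    · rintro a ⟨m, hm, c, rfl⟩ b ⟨m', hm', c', rfl⟩
      refine ⟨m * m' + (c' • m + c • m'),
        hadd _ (hmul m hm m' hm') _ (hadd _ (hsmul c' m hm) _ (hsmul c m' hm')),
        c * c', hrepr m m' c c'⟩
    · rintro a ⟨m, hm, c, rfl⟩
      exact ⟨star m, hstar m hm, starRingEnd ℂ c, by rw [star_add, star_smul, star_one]; rfl⟩
  have hTcomm : ∀ a ∈ T, ∀ b ∈ T, a * b = b * a := by
    rintro a ⟨m, hm, c, rfl⟩ b ⟨m', hm', c', rfl⟩
    rw [hrepr m m' c c', hrepr m' m c' c, hcomm m hm m' hm', mul_comm c' c]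
    abel
  have hMT : M ⊆ T := fun m hm => ⟨m, hm, 0, by simp⟩
  have := hmax T hTsub hTcomm hMT
  rw [← this]
  exact ⟨0, h0, 1, by simp⟩

lemma masa_sub_mem {M : Set A} (hM : IsStarSubalgSet M) {a b : A}
    (ha : a ∈ M) (hb : b ∈ M) : a - b ∈ M := by
  have := hM.2.1 a ha _ (hM.2.2.1 (-1 : ℂ) b hb)
  rwa [neg_one_smul, ← sub_eq_add_neg] at this

/-- The key construction: the support projection of `v` inside a monotone σ-complete masa
containing all iterated square roots of `v`. -/
lemma support_proj {M : Set A} (hM : IsMasa M) (hσ : MonotoneSigmaComplete M)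
    {v : A} (hv0 : 0 ≤ v) (hv1 : ‖v‖ ≤ 1) (hmem : ∀ k, sqrtSeq v k ∈ M) :
    ∃ b ∈ M, star b = b ∧ b * b = b ∧ (∀ k, sqrtSeq v k ≤ b) ∧ v * b = v ∧ b * v = v ∧
      (∀ m ∈ M, star m = m → (∀ k, sqrtSeq v k ≤ m) → b ≤ m) := by
  obtain ⟨b, hbM, hbsa, hub, hmin⟩ := hσ (sqrtSeq v) hmem (sqrtSeq_star hv0)
    (sqrtSeq_mono hv0 hv1) ⟨1, sqrtSeq_norm_le_one hv0 hv1⟩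
  have hb0 : 0 ≤ b := hv0.trans (hub 0)
  have hb1 : b ≤ 1 := hmin 1 (masa_one hM) (star_one A) (fun k => sqrtSeq_le_one hv0 hv1 k)
  have hsq_le : b * b ≤ b := sq_le_self hb0 hb1
  have hsq_ge : b ≤ b * b := by
    refine hmin (b * b) (hM.1.2.2.2.1 b hbM b hbM) (by rw [star_mul, hbsa]) (fun k => ?_)
    have hcomm : sqrtSeq v (k+1) * b = b * sqrtSeq v (k+1) :=
      hM.2.1 _ (hmem (k+1)) b hbM
    have := mul_self_le_mul_self_comm (sqrtSeq_nonneg hv0 (k+1)) hb0 (hub (k+1)) hcomm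
    rwa [sqrtSeq_succ_mul hv0 k] at this
  have hproj : b * b = b := le_antisymm hsq_le hsq_ge
  have habs := absorb hv0 hbsa hproj (hub 0)
  exact ⟨b, hbM, hbsa, hproj, hub, habs.1, habs.2, hmin⟩

end MasaFacts

section FinalHelpers
variable {A : Type*} [CStarAlgebra A] [PartialOrder A] [StarOrderedRing A]

lemma smul_nonneg_real {a : A} (ha : 0 ≤ a) {r : ℝ} (hr : 0 ≤ r) : 0 ≤ ((r:ℂ) • a) := by
  have key : star ((((Real.sqrt r : ℝ) : ℂ)) • (1:A)) * a * ((((Real.sqrt r : ℝ) : ℂ)) • (1:A))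
      = (r:ℂ) • a := by
    rw [star_smul, star_one, Complex.star_def, Complex.conj_ofReal, smul_mul_assoc, one_mul,
      mul_smul_comm, mul_one, smul_smul]
    norm_cast
    rw [Real.mul_self_sqrt hr]
  rw [← key]
  exact star_left_conjugate_nonneg ha _

end FinalHelpers

theorem annihilating_projections_has_largest {A : Type*} [NormedRing A] [StarRing A]
    [CStarRing A] [CompleteSpace A] [NormedAlgebra ℂ A] [StarModule ℂ A]
    [PartialOrder A] [StarOrderedRing A]
    (hmasa : ∀ M : Set A, IsMasa M → MonotoneSigmaComplete M) (x : A) :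
    ∃ f, (star f = f ∧ f * f = f ∧ x * f = 0) ∧
      ∀ e, (star e = e ∧ e * e = e ∧ x * e = 0) → e ≤ f := by
  letI : CStarAlgebra A := { }
  by_cases hx0 : x = 0
  · subst hx0
    exact ⟨1, ⟨star_one A, one_mul 1, zero_mul 1⟩,
      fun e ⟨he1, he2, _⟩ => proj_le_one he1 he2⟩
  -- the positive element `y₀ = x* x`, normalized to `y` of norm one
  set y0 : A := star x * x with hy0def
  have hy0 : 0 ≤ y0 := star_mul_self_nonneg x
  have hy0sa : star y0 = y0 := by rw [hy0def, star_mul, star_star]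
  have hy0ne : y0 ≠ 0 := fun h => hx0 ((CStarRing.star_mul_self_eq_zero_iff x).mp h)
  set ny : ℝ := ‖y0‖ with hnydef
  have hnypos : 0 < ny := norm_pos_iff.mpr hy0ne
  set y : A := ((ny⁻¹ : ℝ) : ℂ) • y0 with hydef
  have hysa : star y = y := by
    rw [hydef, star_smul, hy0sa, Complex.star_def, Complex.conj_ofReal]
  have hy : 0 ≤ y := smul_nonneg_real hy0 (inv_nonneg.mpr hnypos.le)
  have hy1 : ‖y‖ ≤ 1 := by
    rw [hydef, norm_smul]
    simp only [Complex.norm_real, Real.norm_eq_abs, abs_of_nonneg (inv_nonneg.mpr hnypos.le)]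
    rw [← hnydef, inv_mul_cancel₀ hnypos.ne']
  -- annihilation transfer between y, y0 and x
  have hy0_of_hy : ∀ z : A, y * z = 0 → y0 * z = 0 := by
    intro z hz
    rw [hydef, smul_mul_assoc] at hz
    rcases smul_eq_zero.mp hz with h | h
    · exact absurd h (by push_cast; exact inv_ne_zero (by exact_mod_cast hnypos.ne'))
    · exact h
  have hy_of_hy0 : ∀ z : A, y0 * z = 0 → y * z = 0 := by
    intro z hz
    rw [hydef, smul_mul_assoc, hz, smul_zero]
  have hx_of_hy0 : ∀ z : A, y0 * z = 0 → x * z = 0 := by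
    intro z hz
    have : star (x * z) * (x * z) = 0 := by
      calc star (x * z) * (x * z) = star z * (y0 * z) := by
            rw [star_mul, hy0def]; noncomm_ring
        _ = 0 := by rw [hz, mul_zero]
    exact (CStarRing.star_mul_self_eq_zero_iff _).mp this
  -- Zorn: a maximal orthogonal family of nonzero projections annihilating y
  set 𝒟 : Set (Set A) := {D | (∀ d ∈ D, star d = d ∧ d * d = d ∧ d ≠ 0 ∧ y * d = 0) ∧
    (∀ d ∈ D, ∀ d' ∈ D, d ≠ d' → d * d' = 0)} with h𝒟
  have hchainD : ∀ c ⊆ 𝒟, IsChain (· ⊆ ·) c → c.Nonempty → ∃ ub ∈ 𝒟, ∀ s ∈ c, s ⊆ ub := by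
    intro c hc hchain _
    refine ⟨⋃₀ c, ⟨?_, ?_⟩, fun s hs => Set.subset_sUnion_of_mem hs⟩
    · rintro d ⟨S, hS, hdS⟩; exact (hc hS).1 d hdS
    · rintro d ⟨S, hS, hdS⟩ d' ⟨S', hS', hd'S'⟩ hne'
      rcases hchain.total hS hS' with h | h
      · exact (hc hS').2 d (h hdS) d' hd'S' hne'
      · exact (hc hS).2 d hdS d' (h hd'S') hne'
  obtain ⟨D, -, hD⟩ := zorn_subset_nonempty 𝒟 hchainD ∅ (by constructor <;> simp)
  have hDel : ∀ d ∈ D, star d = d ∧ d * d = d ∧ d ≠ 0 ∧ y * d = 0 := hD.prop.1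
  have hDorth : ∀ d ∈ D, ∀ d' ∈ D, d ≠ d' → d * d' = 0 := hD.prop.2
  have hDy2 : ∀ d ∈ D, d * y = 0 := by
    intro d hd
    obtain ⟨hds, _, _, hdy⟩ := hDel d hd
    have := congrArg star hdy
    rwa [star_mul, hds, hysa, star_zero] at this
  -- the masa M containing the sqrt sequence of y and the family D
  have hannD : ∀ d ∈ D, ∀ k, d * sqrtSeq y k = 0 ∧ sqrtSeq y k * d = 0 := by
    intro d hd
    exact sqrtSeq_ann hy (hDy2 d hd) (hDel d hd).2.2.2
  have hsaM : ∀ s ∈ Set.range (sqrtSeq y) ∪ D, star s = s := by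
    rintro s (⟨k, rfl⟩ | hs)
    · exact sqrtSeq_star hy k
    · exact (hDel s hs).1
  have hcommM : ∀ s ∈ Set.range (sqrtSeq y) ∪ D, ∀ t ∈ Set.range (sqrtSeq y) ∪ D,
      s * t = t * s := by
    rintro s (⟨k, rfl⟩ | hs) t (⟨j, rfl⟩ | ht)
    · exact sqrtSeq_commute hy k j
    · rw [(hannD t ht k).2, (hannD t ht k).1]
    · rw [(hannD s hs j).1, (hannD s hs j).2]
    · by_cases hst : s = t
      · rw [hst]
      · rw [hDorth s hs t ht hst, hDorth t ht s hs (Ne.symm hst)]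
  obtain ⟨M, hM, hS₀M⟩ := exists_masa (Set.range (sqrtSeq y) ∪ D) hsaM hcommM
  have hmemM : ∀ k, sqrtSeq y k ∈ M := fun k => hS₀M (Or.inl ⟨k, rfl⟩)
  have hDM : D ⊆ M := fun d hd => hS₀M (Or.inr hd)
  obtain ⟨b, hbM, hbsa, hbproj, hbub, hyb, hby, hbmin⟩ :=
    support_proj hM (hmasa M hM) hy hy1 hmemM
  have hb0 : 0 ≤ b := proj_nonneg hbsa hbproj
  -- b is orthogonal to every member of D
  have hbd : ∀ d ∈ D, b * d = 0 ∧ d * b = 0 := by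
    intro d hd
    obtain ⟨hds, hdp, hdne, hdy⟩ := hDel d hd
    have hd0 : 0 ≤ d := proj_nonneg hds hdp
    have hd1 : d ≤ 1 := proj_le_one hds hdp
    have hk : ∀ k, sqrtSeq y k ≤ 1 - d := by
      intro k
      have := orth_sum_le_one hd0 hd1 (sqrtSeq_nonneg hy k) (sqrtSeq_le_one hy hy1 k)
        (hannD d hd k).1 (hannD d hd k).2
      rwa [add_comm, ← le_sub_iff_add_le] at this
    have hble : b ≤ 1 - d := hbmin (1 - d) (masa_sub_mem hM.1 (masa_one hM) (hDM hd))
      (by rw [star_sub, star_one, hds]) hk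
    have h1 : star d * b * d ≤ star d * (1 - d) * d := star_left_conjugate_le_conjugate hble d
    have h2 : star d * (1 - d) * d = 0 := by
      rw [hds]
      calc d * (1 - d) * d = (d - d * d) * d := by noncomm_ring
        _ = 0 := by rw [hdp, sub_self, zero_mul]
    have h3 : (0:A) ≤ star d * b * d := star_left_conjugate_nonneg hb0 d
    have h4 : star d * b * d = 0 := le_antisymm (h1.trans_eq h2) h3
    have h5 : star (b * d) * (b * d) = 0 := by
      calc star (b * d) * (b * d) = star d * (star b * b) * d := by rw [star_mul]; noncomm_ring
        _ = star d * b * d := by rw [hbsa, hbproj]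
        _ = 0 := h4
    have h6 : b * d = 0 := (CStarRing.star_mul_self_eq_zero_iff _).mp h5
    have h7 : d * b = 0 := by
      have := congrArg star h6
      rwa [star_mul, hds, hbsa, star_zero] at this
    exact ⟨h6, h7⟩
  -- the candidate largest projection
  refine ⟨1 - b, ⟨by rw [star_sub, star_one, hbsa], ?_, ?_⟩, ?_⟩
  · calc (1 - b) * (1 - b) = 1 - b - (b - b * b) := by noncomm_ring
      _ = 1 - b := by rw [hbproj, sub_self, sub_zero]
  · -- x * (1 - b) = 0
    apply hx_of_hy0
    apply hy0_of_hy
    rw [mul_sub, mul_one, hyb, sub_self]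
  -- maximality
  intro e ⟨hesa, heproj, hexe⟩
  have he0 : 0 ≤ e := proj_nonneg hesa heproj
  have hy0e : y0 * e = 0 := by rw [hy0def, mul_assoc, hexe, mul_zero]
  have hye : y * e = 0 := hy_of_hy0 e hy0e
  have hey : e * y = 0 := by
    have := congrArg star hye
    rwa [star_mul, hesa, hysa, star_zero] at this
  -- the crucial element τ = b e b
  set τ : A := b * e * b with hτdef
  have hτsa : star τ = τ := by
    rw [hτdef, star_mul, star_mul, hesa, hbsa, mul_assoc]
  have hτ0 : 0 ≤ τ := by
    have := star_left_conjugate_nonneg he0 b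
    rwa [hbsa] at this
  have hτy : τ * y = 0 := by
    rw [hτdef, mul_assoc, mul_assoc, hby, ← mul_assoc, mul_assoc, hey, mul_zero]
  have hyτ : y * τ = 0 := by
    have := congrArg star hτy
    rwa [star_mul, hτsa, hysa, star_zero] at this
  have hτzero : τ = 0 := by
    by_contra hτne
    -- normalize τ
    set nτ : ℝ := ‖τ‖ with hnτdef
    have hnτpos : 0 < nτ := norm_pos_iff.mpr hτne
    set τ' : A := ((nτ⁻¹ : ℝ) : ℂ) • τ with hτ'def
    have hτ'0 : 0 ≤ τ' := smul_nonneg_real hτ0 (inv_nonneg.mpr hnτpos.le)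
    have hτ'1 : ‖τ'‖ ≤ 1 := by
      rw [hτ'def, norm_smul]
      simp only [Complex.norm_real, Real.norm_eq_abs, abs_of_nonneg (inv_nonneg.mpr hnτpos.le)]
      rw [← hnτdef, inv_mul_cancel₀ hnτpos.ne']
    have hτ'y : τ' * y = 0 := by rw [hτ'def, smul_mul_assoc, hτy, smul_zero]
    have hyτ' : y * τ' = 0 := by rw [hτ'def, mul_smul_comm, hyτ, smul_zero]
    -- annihilation relations
    have hτa : ∀ k, τ * sqrtSeq y k = 0 ∧ sqrtSeq y k * τ = 0 := sqrtSeq_ann hy hτy hyτ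
    have hat : ∀ k j, sqrtSeq y k * sqrtSeq τ' j = 0 ∧ sqrtSeq τ' j * sqrtSeq y k = 0 := by
      intro k
      apply sqrtSeq_ann hτ'0
      · rw [hτ'def, mul_smul_comm, (hτa k).2, smul_zero]
      · rw [hτ'def, smul_mul_assoc, (hτa k).1, smul_zero]
    have hdτ : ∀ d ∈ D, d * τ = 0 ∧ τ * d = 0 := by
      intro d hd
      constructor
      · rw [hτdef, ← mul_assoc, ← mul_assoc, (hbd d hd).2, zero_mul, zero_mul]
      · rw [hτdef, mul_assoc, mul_assoc, (hbd d hd).1, mul_zero, mul_zero]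
    have hdt : ∀ d ∈ D, ∀ j, d * sqrtSeq τ' j = 0 ∧ sqrtSeq τ' j * d = 0 := by
      intro d hd
      apply sqrtSeq_ann hτ'0
      · rw [hτ'def, mul_smul_comm, (hdτ d hd).1, smul_zero]
      · rw [hτ'def, smul_mul_assoc, (hdτ d hd).2, smul_zero]
    -- the masa N
    have hsaN : ∀ s ∈ (Set.range (sqrtSeq y) ∪ Set.range (sqrtSeq τ')) ∪ D, star s = s := by
      rintro s ((⟨k, rfl⟩ | ⟨j, rfl⟩) | hs)
      · exact sqrtSeq_star hy k
      · exact sqrtSeq_star hτ'0 j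
      · exact (hDel s hs).1
    have hcommN : ∀ s ∈ (Set.range (sqrtSeq y) ∪ Set.range (sqrtSeq τ')) ∪ D,
        ∀ t ∈ (Set.range (sqrtSeq y) ∪ Set.range (sqrtSeq τ')) ∪ D, s * t = t * s := by
      rintro s ((⟨k, rfl⟩ | ⟨j, rfl⟩) | hs) t ((⟨k', rfl⟩ | ⟨j', rfl⟩) | ht)
      · exact sqrtSeq_commute hy k k'
      · rw [(hat k j').1, (hat k j').2]
      · rw [(hannD t ht k).2, (hannD t ht k).1]
      · rw [(hat k' j).2, (hat k' j).1]
      · exact sqrtSeq_commute hτ'0 j j'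
      · rw [(hdt t ht j).2, (hdt t ht j).1]
      · rw [(hannD s hs k').1, (hannD s hs k').2]
      · rw [(hdt s hs j').1, (hdt s hs j').2]
      · by_cases hst : s = t
        · rw [hst]
        · rw [hDorth s hs t ht hst, hDorth t ht s hs (Ne.symm hst)]
    obtain ⟨N, hN, hS₀N⟩ := exists_masa
      ((Set.range (sqrtSeq y) ∪ Set.range (sqrtSeq τ')) ∪ D) hsaN hcommN
    have hmemNy : ∀ k, sqrtSeq y k ∈ N := fun k => hS₀N (Or.inl (Or.inl ⟨k, rfl⟩))
    have hmemNt : ∀ j, sqrtSeq τ' j ∈ N := fun j => hS₀N (Or.inl (Or.inr ⟨j, rfl⟩))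
    have hDN : D ⊆ N := fun d hd => hS₀N (Or.inr hd)
    obtain ⟨d0, hd0N, hd0sa, hd0proj, hd0ub, hτ'd0, hd0τ', hd0min⟩ :=
      support_proj hN (hmasa N hN) hτ'0 hτ'1 hmemNt
    have hd0ne : d0 ≠ 0 := by
      intro h0
      rw [h0, mul_zero] at hτ'd0
      have hτ'eq : ((nτ : ℝ) : ℂ) • τ' = τ := by
        rw [hτ'def, smul_smul]
        norm_cast
        simp [mul_inv_cancel₀ hnτpos.ne']
      apply hτne
      rw [← hτ'eq, ← hτ'd0, smul_zero]
    -- d0 annihilates the sqrt sequence of y, in particular y itself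
    have had0 : ∀ k, sqrtSeq y k * d0 = 0 ∧ d0 * sqrtSeq y k = 0 := by
      intro k
      have hk : ∀ j, sqrtSeq τ' j ≤ 1 - sqrtSeq y k := by
        intro j
        have := orth_sum_le_one (sqrtSeq_nonneg hy k) (sqrtSeq_le_one hy hy1 k)
          (sqrtSeq_nonneg hτ'0 j) (sqrtSeq_le_one hτ'0 hτ'1 j)
          (hat k j).1 (hat k j).2
        rwa [add_comm, ← le_sub_iff_add_le] at this
      have hd0le : d0 ≤ 1 - sqrtSeq y k := hd0min _
        (masa_sub_mem hN.1 (masa_one hN) (hmemNy k))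
        (by rw [star_sub, star_one, sqrtSeq_star hy k]) hk
      have hak : sqrtSeq y k ≤ 1 - d0 := by
        have h := le_sub_iff_add_le.mp hd0le
        rw [add_comm] at h
        exact le_sub_iff_add_le.mpr h
      have h2 : star d0 * sqrtSeq y k * d0 ≤ star d0 * (1 - d0) * d0 :=
        star_left_conjugate_le_conjugate hak d0
      have h3 : star d0 * (1 - d0) * d0 = 0 := by
        rw [hd0sa]
        calc d0 * (1 - d0) * d0 = (d0 - d0 * d0) * d0 := by noncomm_ring
          _ = 0 := by rw [hd0proj, sub_self, zero_mul]
      have h4 : (0:A) ≤ star d0 * sqrtSeq y k * d0 :=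
        star_left_conjugate_nonneg (sqrtSeq_nonneg hy k) d0
      have h5 : star d0 * sqrtSeq y k * d0 = 0 := le_antisymm (h2.trans_eq h3) h4
      have hs : sqrtSeq y (k+1) * sqrtSeq y (k+1) = sqrtSeq y k := sqrtSeq_succ_mul hy k
      have h6 : star (sqrtSeq y (k+1) * d0) * (sqrtSeq y (k+1) * d0) = 0 := by
        rw [star_mul, hd0sa, sqrtSeq_star hy (k+1)]
        calc d0 * sqrtSeq y (k+1) * (sqrtSeq y (k+1) * d0)
            = d0 * (sqrtSeq y (k+1) * sqrtSeq y (k+1)) * d0 := by noncomm_ring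
          _ = star d0 * sqrtSeq y k * d0 := by rw [hs, hd0sa]
          _ = 0 := h5
      have h7 : sqrtSeq y (k+1) * d0 = 0 := (CStarRing.star_mul_self_eq_zero_iff _).mp h6
      have h8 : sqrtSeq y k * d0 = 0 := by rw [← hs, mul_assoc, h7, mul_zero]
      have h9 : d0 * sqrtSeq y k = 0 := by
        have := congrArg star h8
        rwa [star_mul, hd0sa, sqrtSeq_star hy k, star_zero] at this
      exact ⟨h8, h9⟩
    have hyd0 : y * d0 = 0 := (had0 0).1
    -- d0 is orthogonal to every member of D
    have hd0D : ∀ d ∈ D, d0 * d = 0 ∧ d * d0 = 0 := by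
      intro d hd
      obtain ⟨hds, hdp, hdne2, hdy⟩ := hDel d hd
      have hk : ∀ j, sqrtSeq τ' j ≤ 1 - d := by
        intro j
        have := orth_sum_le_one (proj_nonneg hds hdp) (proj_le_one hds hdp)
          (sqrtSeq_nonneg hτ'0 j) (sqrtSeq_le_one hτ'0 hτ'1 j) (hdt d hd j).1 (hdt d hd j).2
        rwa [add_comm, ← le_sub_iff_add_le] at this
      have hd0le : d0 ≤ 1 - d := hd0min _ (masa_sub_mem hN.1 (masa_one hN) (hDN hd))
        (by rw [star_sub, star_one, hds]) hk
      have h2 : star d * d0 * d ≤ star d * (1 - d) * d := star_left_conjugate_le_conjugate hd0le d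
      have h3 : star d * (1 - d) * d = 0 := by
        rw [hds]
        calc d * (1 - d) * d = (d - d * d) * d := by noncomm_ring
          _ = 0 := by rw [hdp, sub_self, zero_mul]
      have h4 : (0:A) ≤ star d * d0 * d := star_left_conjugate_nonneg (proj_nonneg hd0sa hd0proj) d
      have h5 : star d * d0 * d = 0 := le_antisymm (h2.trans_eq h3) h4
      have h6 : star (d0 * d) * (d0 * d) = 0 := by
        rw [star_mul, hds, hd0sa]
        calc d * d0 * (d0 * d) = d * (d0 * d0) * d := by noncomm_ring
          _ = star d * d0 * d := by rw [hd0proj, hds]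
          _ = 0 := h5
      have h7 : d0 * d = 0 := (CStarRing.star_mul_self_eq_zero_iff _).mp h6
      have h8 : d * d0 = 0 := by
        have := congrArg star h7
        rwa [star_mul, hds, hd0sa, star_zero] at this
      exact ⟨h7, h8⟩
    by_cases hd0mem : d0 ∈ D
    · have := (hd0D d0 hd0mem).1
      rw [hd0proj] at this
      exact hd0ne this
    · have hD' : insert d0 D ∈ 𝒟 := by
        constructor
        · intro d hd
          rcases Set.mem_insert_iff.mp hd with rfl | hd
          · exact ⟨hd0sa, hd0proj, hd0ne, hyd0⟩
          · exact hDel d hd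
        · intro d hd d' hd' hne'
          rcases Set.mem_insert_iff.mp hd with heq | hdD
          · rcases Set.mem_insert_iff.mp hd' with heq' | hd'D
            · exact absurd (heq.trans heq'.symm) hne'
            · rw [heq]
              exact (hd0D d' hd'D).1
          · rcases Set.mem_insert_iff.mp hd' with heq' | hd'D
            · rw [heq']
              exact (hd0D d hdD).2
            · exact hDorth d hdD d' hd'D hne'
      have hsub := hD.le_of_ge hD' (Set.subset_insert d0 D)
      exact hd0mem (hsub (Set.mem_insert d0 D))
  -- from τ = 0 conclude e ≤ 1 - b
  have h1 : star (e * b) * (e * b) = τ := by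
    rw [star_mul, hesa, hbsa, hτdef]
    calc b * e * (e * b) = b * (e * e) * b := by noncomm_ring
      _ = b * e * b := by rw [heproj]
  have heb : e * b = 0 := (CStarRing.star_mul_self_eq_zero_iff _).mp (h1.trans hτzero)
  have hbe : b * e = 0 := by
    have := congrArg star heb
    rwa [star_mul, hesa, hbsa, star_zero] at this
  have hpstar : star (b + e) = b + e := by rw [star_add, hbsa, hesa]
  have hpproj : (b + e) * (b + e) = b + e := by
    calc (b + e) * (b + e) = b * b + b * e + e * b + e * e := by noncomm_ring
      _ = b + e := by rw [hbproj, heproj, hbe, heb]; abel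
  have hle : b + e ≤ 1 := proj_le_one hpstar hpproj
  have : e + b ≤ 1 := by rwa [add_comm] at hle
  rwa [← le_sub_iff_add_le] at this
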